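/- If D is a conjunction of linear inequality constraints s^{p_i} α_i ≤ s^{q_i} β_i whose dependency graph contains an increasing cycle (a cycle whose total cost, i.e., the sum of labels p−q along its edges, is strictly positive), then every solution φ of D maps every variable occurring in the cycle to a size expression whose normal form is ∞. -/

import Mathlib

/-- Size expressions of the size algebra A: a ::= α | s a | ∞. -/
inductive SExpr : Type
  | var : ℕ → SExpr
  | s : SExpr → SExpr
  | infty : SExpr
deriving DecidableEq

/-- The quasi-ordering ≤_A on size expressions. -/
inductive SLe : SExpr → SExpr → Prop
  | refl (a) : SLe a a
  | trans {a b c} : SLe a b → SLe b c → SLe a c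
  | mon {a b} : SLe a b → SLe (.s a) (.s b)
  | succ {a b} : SLe a b → SLe a (.s b)
  | infty (a) : SLe a .infty

/-- Normal form w.r.t. the rewrite rule s∞ → ∞. -/
def nf : SExpr → SExpr
  | .var α => .var α
  | .infty => .infty
  | .s a =>
    match nf a with
    | .infty => .infty
    | b => .s b

/-- Action of a size substitution on size expressions. -/
def subst (φ : ℕ → SExpr) : SExpr → SExpr
  | .var α => φ α
  | .s a => .s (subst φ a)
  | .infty => .infty

/-- A linear inequality constraint s^p α ≤ s^q β between size variables. -/
structure LinIneq : Type where
  p : ℕ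
  α : ℕ
  q : ℕ
  β : ℕ

/-- φ solves the linear inequality s^p α ≤ s^q β. -/
def SolvesLin (φ : ℕ → SExpr) (e : LinIneq) : Prop :=
  SLe (SExpr.s^[e.p] (φ e.α)) (SExpr.s^[e.q] (φ e.β))

/-- A cycle of a conjunction D of linear inequalities: a nonempty list of
constraints of D whose edges α →^{p−q} β chain up cyclically. -/
def IsCycle (D L : List LinIneq) : Prop :=
  L ≠ [] ∧ (∀ e ∈ L, e ∈ D) ∧
  ∀ i : Fin L.length,
    (L.get i).β = (L.get ⟨(i + 1) % L.length, Nat.mod_lt _ i.pos⟩).α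

/-- The cost of a list of edges: the sum of the labels p − q. -/
def cost (L : List LinIneq) : ℤ :=
  (L.map (fun e => (e.p : ℤ) - (e.q : ℤ))).sum

/-- Numeric valuation of a size expression in ℕ∞ (variables ↦ 0). -/
def SExpr.val : SExpr → ℕ∞
  | .var _ => 0
  | .s a => a.val + 1
  | .infty => ⊤

lemma val_iter (k : ℕ) (a : SExpr) : (SExpr.s^[k] a).val = a.val + k := by
  induction k with
  | zero => simp
  | succ k ih =>
      rw [Function.iterate_succ_apply']
      show (SExpr.s^[k] a).val + 1 = _
      rw [ih]; push_cast; ring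

lemma sle_val {a b : SExpr} (h : SLe a b) : a.val ≤ b.val := by
  induction h with
  | refl => exact le_rfl
  | trans _ _ h1 h2 => exact h1.trans h2
  | mon _ ih => exact add_le_add_left ih 1
  | succ _ ih => exact ih.trans (le_add_right le_rfl)
  | infty => exact le_top

lemma nf_eq_infty_iff (a : SExpr) : nf a = .infty ↔ a.val = ⊤ := by
  induction a with
  | var α => simp [nf, SExpr.val]
  | infty => simp [nf, SExpr.val]
  | s a ih =>
      have hv : (SExpr.s a).val = a.val + 1 := rfl
      rw [hv, ENat.add_eq_top]
      cases h : nf a with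
      | infty =>
          have h1 : nf (SExpr.s a) = .infty := by rw [nf, h]
          simp [h1, ih.mp h]
      | var β =>
          have h1 : nf (SExpr.s a) = .s (.var β) := by rw [nf, h]
          have h2 : a.val ≠ ⊤ := fun hv => by simp [ih.mpr hv] at h
          simp [h1, h2]
      | s b =>
          have h1 : nf (SExpr.s a) = .s (.s b) := by rw [nf, h]
          have h2 : a.val ≠ ⊤ := fun hv => by simp [ih.mpr hv] at h
          simp [h1, h2]

lemma map_sum_fin {α : Type*} (f : α → ℤ) (L : List α) :
    (L.map f).sum = ∑ i : Fin L.length, f (L.get i) := by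
  induction L with
  | nil => simp
  | cons x L ih =>
      simp only [List.map_cons, List.sum_cons, ih, List.length_cons, Fin.sum_univ_succ]
      rfl

open Fin.NatCast

/-- If the dependency graph of D contains an increasing cycle (total cost > 0),
then every solution of D maps every variable of the cycle to an expression
whose normal form is ∞. -/
theorem cycle_vars_infty (D L : List LinIneq)
    (hcyc : IsCycle D L) (hcost : 0 < cost L)
    (φ : ℕ → SExpr) (hsol : ∀ e ∈ D, SolvesLin φ e) :
    ∀ e ∈ L, nf (φ e.α) = .infty ∧ nf (φ e.β) = .infty := by
  obtain ⟨hne, hD, hchain⟩ := hcyc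
  have hnpos : 0 < L.length := List.length_pos_iff.mpr hne
  haveI : NeZero L.length := ⟨hnpos.ne'⟩
  let f : Fin L.length → ℕ∞ := fun i => (φ (L.get i).α).val
  have hsucc : ∀ i : Fin L.length,
      (⟨((i : ℕ) + 1) % L.length, Nat.mod_lt _ i.pos⟩ : Fin L.length) = i + 1 := by
    intro i
    apply Fin.ext
    have h1 : ((1 : Fin L.length) : ℕ) = 1 % L.length := rfl
    have h2 : ((i + 1 : Fin L.length) : ℕ) = ((i : ℕ) + (1 : Fin L.length)) % L.length :=
      Fin.val_add i 1
    have h3 : (i : ℕ) < L.length := i.isLt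
    simp only [h2, h1]
    rw [Nat.add_mod ((i : ℕ)) 1, Nat.mod_eq_of_lt h3]
  have key : ∀ i : Fin L.length,
      f i + ((L.get i).p : ℕ∞) ≤ f (i + 1) + ((L.get i).q : ℕ∞) := by
    intro i
    have hm : L.get i ∈ D := hD _ (L.get_mem _)
    have h := sle_val (hsol _ hm)
    rw [val_iter, val_iter] at h
    have hb := hchain i
    rw [hsucc i] at hb
    rw [hb] at h
    exact h
  have htop : ∃ i, f i = ⊤ := by
    by_contra hall
    push_neg at hall
    have hg : ∀ i, ∃ m : ℕ, f i = (m : ℕ∞) := by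
      intro i
      obtain ⟨m, hm⟩ := ENat.ne_top_iff_exists.mp (hall i)
      exact ⟨m, hm.symm⟩
    choose g hg using hg
    have hnat : ∀ i : Fin L.length,
        ((L.get i).p : ℤ) - (L.get i).q ≤ (g (i + 1) : ℤ) - g i := by
      intro i
      have h := key i
      rw [hg i, hg (i + 1)] at h
      have h2 : g i + (L.get i).p ≤ g (i + 1) + (L.get i).q := by exact_mod_cast h
      omega
    have hcost' : cost L = ∑ i : Fin L.length, (((L.get i).p : ℤ) - (L.get i).q) :=
      map_sum_fin _ L
    have hsum : ∑ i : Fin L.length, ((g (i + 1) : ℤ) - g i) = 0 := by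
      rw [Finset.sum_sub_distrib, sub_eq_zero]
      exact Fintype.sum_equiv (Equiv.addRight (1 : Fin L.length)) _ _ (fun i => rfl)
    have hle : cost L ≤ 0 := by
      rw [hcost', ← hsum]
      exact Finset.sum_le_sum (fun i _ => hnat i)
    omega
  obtain ⟨i0, hi0⟩ := htop
  have step : ∀ i : Fin L.length, f i = ⊤ → f (i + 1) = ⊤ := by
    intro i hi
    have h := key i
    rw [hi, top_add] at h
    have h2 := top_le_iff.mp h
    rcases ENat.add_eq_top.mp h2 with h3 | h3
    · exact h3
    · exact absurd h3 (ENat.natCast_ne_top _)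
  have hall : ∀ i : Fin L.length, f i = ⊤ := by
    have hk : ∀ k : ℕ, f (i0 + (k : Fin L.length)) = ⊤ := by
      intro k
      induction k with
      | zero => simpa using hi0
      | succ k ih =>
          have hc : ((k + 1 : ℕ) : Fin L.length) = (k : Fin L.length) + 1 := by
            push_cast; ring
          rw [hc, ← add_assoc]
          exact step _ ih
    intro j
    have h := hk ((j - i0 : Fin L.length) : ℕ)
    rwa [Fin.cast_val_eq_self, add_comm, sub_add_cancel] at h
  intro e he
  obtain ⟨i, hi⟩ := List.mem_iff_get.mp he
  constructor
  · rw [← hi]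
    exact (nf_eq_infty_iff _).mpr (hall i)
  · have hb := hchain i
    rw [hsucc i] at hb
    rw [← hi, hb]
    exact (nf_eq_infty_iff _).mpr (hall (i + 1))
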